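/- Let A be an n × n real symmetric matrix with nonnegative entries such that P_A(z) = (1/2)zᵀAz is nonvanishing on H^n. Then (xᵀAy)² ≥ (xᵀAx)(yᵀAy) for all x, y ∈ ℝ^n with nonnegative entries. -/

import Mathlib

theorem stmt10 {n : ℕ} (A : Matrix (Fin n) (Fin n) ℝ) (hsymm : A.IsSymm)
    (hnn : ∀ i j, 0 ≤ A i j)
    (hP : ∀ z : Fin n → ℂ, (∀ i, 0 < (z i).re) →
      (1 / 2 : ℂ) * ∑ i, ∑ j, (A i j : ℂ) * z i * z j ≠ 0) :
    ∀ x y : Fin n → ℝ, (∀ i, 0 ≤ x i) → (∀ i, 0 ≤ y i) →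
      (∑ i, ∑ j, x i * A i j * y j) ^ 2 ≥
        (∑ i, ∑ j, x i * A i j * x j) * (∑ i, ∑ j, y i * A i j * y j) := by
  intro x y hx hy
  by_contra hlt
  push_neg at hlt
  -- perturb y to be strictly positive
  set f : ℝ → ℝ := fun ε =>
    (∑ i, ∑ j, x i * A i j * (y j + ε)) ^ 2 -
      (∑ i, ∑ j, x i * A i j * x j) * (∑ i, ∑ j, (y i + ε) * A i j * (y j + ε)) with hf_def
  have hf : Continuous f := by
    apply Continuous.sub
    · exact (continuous_finset_sum _ fun i _ => continuous_finset_sum _ fun j _ => by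
        fun_prop).pow 2
    · exact continuous_const.mul (continuous_finset_sum _ fun i _ =>
        continuous_finset_sum _ fun j _ => by fun_prop)
  have h0 : f 0 < 0 := by
    simp only [hf_def, add_zero]
    linarith
  have hev : ∀ᶠ ε in nhds (0 : ℝ), f ε < 0 :=
    (hf.continuousAt).eventually_lt continuousAt_const h0
  obtain ⟨ε, hfε, hε⟩ :=
    ((hev.filter_mono nhdsWithin_le_nhds).and self_mem_nhdsWithin).exists
      (f := nhdsWithin (0:ℝ) (Set.Ioi 0))
  set y' : Fin n → ℝ := fun i => y i + ε with hy'_def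
  have hy' : ∀ i, 0 < y' i := fun i => by have := hy i; simp [hy'_def]; linarith
  set C : ℝ := ∑ i, ∑ j, x i * A i j * x j with hC_def
  set B : ℝ := ∑ i, ∑ j, x i * A i j * y' j with hB_def
  set A' : ℝ := ∑ i, ∑ j, y' i * A i j * y' j with hA'_def
  have hD : B ^ 2 < C * A' := by
    have : f ε < 0 := hfε
    simp only [hf_def] at this
    simp only [hB_def, hA'_def, hy'_def, hC_def]
    linarith
  have hCnn : 0 ≤ C := Finset.sum_nonneg fun i _ => Finset.sum_nonneg fun j _ => by
    have := hx i; have := hx j; have := hnn i j; positivity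
  have hA'pos : 0 < A' := by
    nlinarith [sq_nonneg B]
  -- the complex root
  set s : ℝ := Real.sqrt (C * A' - B ^ 2) with hs_def
  have hspos : 0 < s := Real.sqrt_pos.mpr (by linarith)
  have hs2 : s ^ 2 = C * A' - B ^ 2 := Real.sq_sqrt (by linarith)
  set t : ℂ := (-(B : ℂ) + Complex.I * s) / A' with ht_def
  have hA'ne : (A' : ℂ) ≠ 0 := by
    exact_mod_cast ne_of_gt hA'pos
  have hroot : (C : ℂ) + 2 * B * t + A' * t ^ 2 = 0 := by
    have hs2' : (s : ℂ) ^ 2 = (C : ℂ) * A' - (B : ℂ) ^ 2 := by exact_mod_cast hs2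
    rw [ht_def]
    field_simp
    linear_combination (s:ℂ)^2 * Complex.I_sq - hs2'
  set z : Fin n → ℂ := fun i => (x i : ℂ) + t * (y' i : ℂ) with hz_def
  have hPz : ∑ i, ∑ j, (A i j : ℂ) * z i * z j = 0 := by
    have expand : ∑ i, ∑ j, (A i j : ℂ) * z i * z j =
        (∑ i, ∑ j, (A i j : ℂ) * (x i) * (x j))
        + t * (∑ i, ∑ j, (A i j : ℂ) * (x i) * (y' j))
        + t * (∑ i, ∑ j, (A i j : ℂ) * (y' i) * (x j))
        + t ^ 2 * (∑ i, ∑ j, (A i j : ℂ) * (y' i) * (y' j)) := by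
      simp only [hz_def, Finset.mul_sum]
      rw [← Finset.sum_add_distrib, ← Finset.sum_add_distrib, ← Finset.sum_add_distrib]
      refine Finset.sum_congr rfl fun i _ => ?_
      rw [← Finset.sum_add_distrib, ← Finset.sum_add_distrib, ← Finset.sum_add_distrib]
      refine Finset.sum_congr rfl fun j _ => ?_
      ring
    have hsymm' : (∑ i, ∑ j, (A i j : ℂ) * (y' i) * (x j))
        = ∑ i, ∑ j, (A i j : ℂ) * (x i) * (y' j) := by
      rw [Finset.sum_comm]
      refine Finset.sum_congr rfl fun i _ => Finset.sum_congr rfl fun j _ => ?_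
      rw [hsymm.apply i j]
      ring
    have hCc : (∑ i, ∑ j, (A i j : ℂ) * (x i) * (x j)) = (C : ℂ) := by
      rw [hC_def]; push_cast; exact Finset.sum_congr rfl fun i _ =>
        Finset.sum_congr rfl fun j _ => by ring
    have hBc : (∑ i, ∑ j, (A i j : ℂ) * (x i) * (y' j)) = (B : ℂ) := by
      rw [hB_def]; push_cast; exact Finset.sum_congr rfl fun i _ =>
        Finset.sum_congr rfl fun j _ => by ring
    have hAc : (∑ i, ∑ j, (A i j : ℂ) * (y' i) * (y' j)) = (A' : ℂ) := by
      rw [hA'_def]; push_cast; exact Finset.sum_congr rfl fun i _ =>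
        Finset.sum_congr rfl fun j _ => by ring
    rw [expand, hsymm', hBc, hCc, hAc]
    linear_combination hroot
  -- rotate z into the right half plane
  set w : Fin n → ℂ := fun i => -Complex.I * z i with hw_def
  have hwre : ∀ i, 0 < (w i).re := by
    intro i
    have htim : t.im = s / A' := by
      rw [ht_def]
      rw [Complex.div_im]
      simp [Complex.normSq_ofReal]
      field_simp
    have him : (z i).im = s / A' * y' i := by
      simp [hz_def, htim]
    have : (w i).re = (z i).im := by
      simp [hw_def]
    rw [this, him]
    have := hy' i
    positivity
  refine hP w hwre ?_
  have : ∑ i, ∑ j, (A i j : ℂ) * w i * w j = - ∑ i, ∑ j, (A i j : ℂ) * z i * z j := by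
    simp only [hw_def, ← Finset.sum_neg_distrib]
    refine Finset.sum_congr rfl fun i _ => Finset.sum_congr rfl fun j _ => ?_
    have : Complex.I * Complex.I = -1 := Complex.I_mul_I
    linear_combination (A i j : ℂ) * z i * z j * this
  rw [this, hPz]
  simp
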